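/- Consider the scenario-tree recursion. Then the supremum of the one-shot objective F over all one-shot assignments 𝐱 equals the root value W_1^{root} (the level-1 node value, which is max_{x_1} [c_1(x_1) + (1/m_1) Σ_{j_1=1}^{m_1} W_2^{(j_1)}(x_1)]), and this supremum is attained by some one-shot assignment. -/

import Mathlib

/-- A level-`t` node (0-indexed) of the scenario tree with branching numbers `m`:
a multi-index selecting a branch at each earlier level. The root is the unique
level-`0` node. -/
abbrev Node (m : ℕ → ℕ) (t : ℕ) : Type := (i : Fin t) → Fin (m i)

/-- The root node. -/
def Node.root (m : ℕ → ℕ) : Node m 0 := fun i => i.elim0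

/-- Extend a level-`t` node by choosing branch `jt` at level `t`. -/
def Node.snoc {m : ℕ → ℕ} {t : ℕ} (j : Node m t) (jt : Fin (m t)) : Node m (t + 1) :=
  Fin.snoc (α := fun i : Fin (t + 1) => Fin (m i)) j jt

/-- Truncate a level-`t` node to level `s ≤ t`. -/
def Node.take {m : ℕ → ℕ} {t : ℕ} (j : Node m t) (s : ℕ) (h : s ≤ t) : Node m s :=
  fun i => j (Fin.castLE h i)

/-- The along-path decisions of a one-shot assignment `A` at the level-`t` node `j`. -/
def pathX {X : Type*} {m : ℕ → ℕ} (A : (t : ℕ) → Node m t → X) (t : ℕ) (j : Node m t) :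
    Fin (t + 1) → X :=
  fun i => A i (j.take i (Nat.lt_succ_iff.mp i.isLt))

/-- The one-shot objective of the assignment `A`: the weighted sum over all nodes of the
stage rewards evaluated at the along-path decisions. -/
noncomputable def oneShotF {X : Type*} (k : ℕ) (m : ℕ → ℕ)
    (c : (t : ℕ) → Node m t → (Fin (t + 1) → X) → ℝ)
    (A : (t : ℕ) → Node m t → X) : ℝ :=
  ∑ t ∈ Finset.range k, (∏ i ∈ Finset.range t, (1 / (m i : ℝ))) *
    ∑ j : Node m t, c t j (pathX A t j)

section Aux

variable {X : Type*} {m : ℕ → ℕ}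

/-- Restriction of a node to an arbitrary level (junk values beyond its own level). -/
def restr (hm : ∀ i, 1 ≤ m i) {s : ℕ} (j : Node m s) (t : ℕ) : Node m t :=
  fun i => if h : (i : ℕ) < s then j ⟨i, h⟩ else ⟨0, hm i⟩

variable (hm : ∀ i, 1 ≤ m i)

lemma restr_self {t : ℕ} (j : Node m t) : restr hm j t = j := by
  funext i; simp [restr, i.isLt]

lemma restr_restr {s u v : ℕ} (j : Node m s) (h : v ≤ u) :
    restr hm (restr hm j u) v = restr hm j v := by
  funext i
  have hiu : (i : ℕ) < u := lt_of_lt_of_le i.isLt h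
  simp [restr, hiu]

lemma restr_snoc_self {t : ℕ} (j : Node m t) (jt : Fin (m t)) :
    restr hm (j.snoc jt) t = j := by
  funext i
  have h : (i : ℕ) < t + 1 := Nat.lt_succ_of_lt i.isLt
  simp only [restr]
  rw [dif_pos h]
  show Node.snoc j jt (Fin.castSucc i) = j i
  simp [Node.snoc]

lemma restr_snoc_lt {t u : ℕ} (j : Node m t) (jt : Fin (m t)) (h : u ≤ t) :
    restr hm (j.snoc jt) u = restr hm j u := by
  funext i
  have h1 : (i : ℕ) < t := lt_of_lt_of_le i.isLt h
  have h2 : (i : ℕ) < t + 1 := Nat.lt_succ_of_lt h1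
  simp only [restr]
  rw [dif_pos h2, dif_pos h1]
  show Node.snoc j jt (Fin.castSucc ⟨(i : ℕ), h1⟩) = j ⟨(i : ℕ), h1⟩
  rw [Node.snoc, Fin.snoc_castSucc]

lemma pathX_eq {t : ℕ} (A : (t : ℕ) → Node m t → X) (j : Node m t) :
    pathX A t j = Fin.snoc (fun i : Fin t => A i (restr hm j i)) (A t j) := by
  funext i
  induction i using Fin.lastCases with
  | last =>
    rw [Fin.snoc_last]
    rfl
  | cast i =>
    rw [Fin.snoc_castSucc]
    show A i (Node.take j i _) = A i (restr hm j i)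
    congr 1
    funext i'
    simp [Node.take, restr, lt_of_lt_of_le i'.isLt (le_of_lt i.isLt), Fin.castLE]

variable (k : ℕ) (c : (t : ℕ) → Node m t → (Fin (t + 1) → X) → ℝ)

/-- Tail value of a one-shot assignment below node `j`. -/
noncomputable def Tail (A : (t : ℕ) → Node m t → X) (t : ℕ) (j : Node m t) : ℝ :=
  ∑ s ∈ Finset.Ico t k, (∏ i ∈ Finset.Ico t s, (1 / (m i : ℝ))) *
    ∑ j' : Node m s, if restr hm j' t = j then c s j' (pathX A s j') else 0

lemma Tail_zero (A : (t : ℕ) → Node m t → X) :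
    Tail hm k c A 0 (Node.root m) = oneShotF k m c A := by
  have hroot : ∀ (s : ℕ) (j' : Node m s), restr hm j' 0 = Node.root m := fun s j' =>
    funext fun i => i.elim0
  unfold Tail oneShotF
  simp [Nat.Ico_zero_eq_range, hroot]

lemma Tail_of_le (A : (t : ℕ) → Node m t → X) {u : ℕ} (h : k ≤ u) (j : Node m u) :
    Tail hm k c A u j = 0 := by
  unfold Tail
  rw [Finset.Ico_eq_empty (by omega)]
  simp

lemma Tail_rec (A : (t : ℕ) → Node m t → X) {t : ℕ} (ht : t < k) (j : Node m t) :
    Tail hm k c A t j =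
      c t j (pathX A t j) +
        (1 / (m t : ℝ)) * ∑ jt : Fin (m t), Tail hm k c A (t + 1) (j.snoc jt) := by
  unfold Tail
  rw [Finset.sum_eq_sum_Ico_succ_bot ht]
  have h0 : (∏ i ∈ Finset.Ico t t, (1 / (m i : ℝ))) *
      (∑ j' : Node m t, if restr hm j' t = j then c t j' (pathX A t j') else 0)
      = c t j (pathX A t j) := by
    simp [restr_self hm, Finset.sum_ite_eq' Finset.univ j]
  rw [h0]
  congr 1
  rw [Finset.sum_comm, Finset.mul_sum]
  refine Finset.sum_congr rfl fun s hs => ?_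
  have hts : t < s := (Finset.mem_Ico.mp hs).1
  have hcond : ∀ (j' : Node m s) (jt : Fin (m t)),
      restr hm j' (t + 1) = j.snoc jt ↔ restr hm j' t = j ∧ jt = j' ⟨t, hts⟩ := by
    intro j' jt
    constructor
    · intro h
      constructor
      · have h2 := congrArg (fun x => restr hm x t) h
        simpa [restr_restr hm j' (Nat.le_succ t), restr_snoc_self hm] using h2
      · have h3 := congrFun h (Fin.last t)
        rw [Node.snoc, Fin.snoc_last] at h3
        simp only [restr, Fin.val_last, hts, dif_pos] at h3
        exact h3.symm
    · rintro ⟨h1, rfl⟩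
      funext i
      induction i using Fin.lastCases with
      | last =>
        rw [Node.snoc, Fin.snoc_last]
        simp [restr, hts]
      | cast i =>
        rw [Node.snoc, Fin.snoc_castSucc]
        have := congrFun h1 i
        have hi : (i : ℕ) < s := lt_of_lt_of_le i.isLt (le_of_lt hts)
        simp only [restr, Fin.coe_castSucc, hi, dif_pos] at this ⊢
        exact this
  have hkey : (∑ j' : Node m s, if restr hm j' t = j then c s j' (pathX A s j') else 0)
      = ∑ jt : Fin (m t), ∑ j' : Node m s,
          if restr hm j' (t + 1) = j.snoc jt then c s j' (pathX A s j') else 0 := by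
    rw [Finset.sum_comm]
    refine Finset.sum_congr rfl fun j' _ => ?_
    simp_rw [hcond j']
    by_cases hP : restr hm j' t = j
    · simp [hP, Finset.sum_ite_eq' Finset.univ (j' ⟨t, hts⟩)]
    · simp [hP]
  rw [hkey, Finset.mul_sum, Finset.mul_sum]
  refine Finset.sum_congr rfl fun jt _ => ?_
  rw [Finset.prod_eq_prod_Ico_succ_bot hts]
  ring

/-- The optimal prefix decisions along the path to each node, for a selection rule `σ`. -/
noncomputable def Pdef (σ : (t : ℕ) → Node m t → (Fin t → X) → X) :
    (t : ℕ) → Node m t → Fin t → X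
  | 0, _ => fun i => i.elim0
  | t + 1, j =>
    Fin.snoc (Pdef σ t (restr hm j t))
      (σ t (restr hm j t) (Pdef σ t (restr hm j t)))

lemma Pdef_eval (σ : (t : ℕ) → Node m t → (Fin t → X) → X) :
    ∀ (t : ℕ) (j : Node m t) (i : Fin t),
      Pdef hm σ t j i = σ i (restr hm j i) (Pdef hm σ i (restr hm j i)) := by
  intro t
  induction t with
  | zero => exact fun j i => i.elim0
  | succ t ih =>
    intro j i
    induction i using Fin.lastCases with
    | last =>
      show Fin.snoc _ _ _ = _
      rw [Fin.snoc_last]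
      rfl
    | cast i =>
      show Fin.snoc _ _ _ = _
      rw [Fin.snoc_castSucc, ih (restr hm j t) i, restr_restr hm j (le_of_lt i.isLt)]
      rfl

lemma Pdef_succ (σ : (t : ℕ) → Node m t → (Fin t → X) → X) (t : ℕ) (j : Node m (t + 1)) :
    Pdef hm σ (t + 1) j =
      Fin.snoc (Pdef hm σ t (restr hm j t))
        (σ t (restr hm j t) (Pdef hm σ t (restr hm j t))) := rfl

lemma Pdef_snoc (σ : (t : ℕ) → Node m t → (Fin t → X) → X) {t : ℕ}
    (j : Node m t) (jt : Fin (m t)) :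
    Pdef hm σ (t + 1) (j.snoc jt) =
      Fin.snoc (Pdef hm σ t j) (σ t j (Pdef hm σ t j)) := by
  rw [Pdef_succ, restr_snoc_self hm]

lemma pref_snoc (A : (t : ℕ) → Node m t → X) {t : ℕ} (j : Node m t) (jt : Fin (m t)) :
    (fun i : Fin (t + 1) => A i (restr hm (j.snoc jt) i)) =
      Fin.snoc (fun i : Fin t => A i (restr hm j i)) (A t j) := by
  funext i
  induction i using Fin.lastCases with
  | last =>
    rw [Fin.snoc_last]
    show A t (restr hm (j.snoc jt) t) = A t j
    rw [restr_snoc_self hm]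
  | cast i =>
    rw [Fin.snoc_castSucc]
    show A i (restr hm (j.snoc jt) i) = A i (restr hm j i)
    rw [restr_snoc_lt hm j jt (le_of_lt i.isLt)]

variable (W : (t : ℕ) → Node m t → (Fin t → X) → ℝ)

lemma tail_le
    (hWlast : ∀ (j : Node m (k - 1)) (x : Fin (k - 1) → X),
      IsGreatest (Set.range fun xk : X => c (k - 1) j (Fin.snoc x xk)) (W (k - 1) j x))
    (hWstep : ∀ t, t + 1 < k → ∀ (j : Node m t) (x : Fin t → X),
      IsGreatest (Set.range fun xt : X =>
          c t j (Fin.snoc x xt) +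
            (1 / (m t : ℝ)) * ∑ jt : Fin (m t), W (t + 1) (j.snoc jt) (Fin.snoc x xt))
        (W t j x)) :
    ∀ (n t : ℕ), k - t ≤ n → t < k → ∀ (j : Node m t) (A : (t : ℕ) → Node m t → X),
      Tail hm k c A t j ≤ W t j (fun i : Fin t => A i (restr hm j i)) := by
  intro n
  induction n with
  | zero => intro t h ht j A; exfalso; omega
  | succ n ih =>
    intro t h ht j A
    rw [Tail_rec hm k c A ht j, pathX_eq hm A j]
    by_cases h1 : t + 1 < k
    · calc c t j (Fin.snoc (fun i : Fin t => A i (restr hm j i)) (A t j)) +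
            (1 / (m t : ℝ)) * ∑ jt : Fin (m t), Tail hm k c A (t + 1) (j.snoc jt)
          ≤ c t j (Fin.snoc (fun i : Fin t => A i (restr hm j i)) (A t j)) +
            (1 / (m t : ℝ)) * ∑ jt : Fin (m t), W (t + 1) (j.snoc jt)
              (Fin.snoc (fun i : Fin t => A i (restr hm j i)) (A t j)) := by
            refine add_le_add (le_refl _) (mul_le_mul_of_nonneg_left
              (Finset.sum_le_sum fun jt _ => ?_) (by positivity))
            have := ih (t + 1) (by omega) h1 (j.snoc jt) A
            rwa [pref_snoc hm A j jt] at this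
        _ ≤ W t j (fun i : Fin t => A i (restr hm j i)) :=
            (hWstep t h1 j _).2 ⟨A t j, rfl⟩
    · have hz : ∀ jt : Fin (m t), Tail hm k c A (t + 1) (j.snoc jt) = 0 := fun jt =>
        Tail_of_le hm k c A (by omega) _
      simp only [hz, Finset.sum_const_zero, mul_zero, add_zero]
      have htk : t = k - 1 := by omega
      subst htk
      exact (hWlast j _).2 ⟨A (k - 1) j, rfl⟩

lemma tail_eq (σ : (t : ℕ) → Node m t → (Fin t → X) → X)
    (hσstep : ∀ t (h : t + 1 < k) (j : Node m t) (x : Fin t → X),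
      c t j (Fin.snoc x (σ t j x)) +
        (1 / (m t : ℝ)) * ∑ jt : Fin (m t), W (t + 1) (j.snoc jt) (Fin.snoc x (σ t j x))
        = W t j x)
    (hσlast : ∀ (j : Node m (k - 1)) (x : Fin (k - 1) → X),
      c (k - 1) j (Fin.snoc x (σ (k - 1) j x)) = W (k - 1) j x) :
    ∀ (n t : ℕ), k - t ≤ n → t < k → ∀ (j : Node m t),
      Tail hm k c (fun t j => σ t j (Pdef hm σ t j)) t j = W t j (Pdef hm σ t j) := by
  intro n
  induction n with
  | zero => intro t h ht j; exfalso; omega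
  | succ n ih =>
    intro t h ht j
    set A : (t : ℕ) → Node m t → X := fun t j => σ t j (Pdef hm σ t j) with hA
    have hpref : (fun i : Fin t => A i (restr hm j i)) = Pdef hm σ t j := by
      funext i
      exact (Pdef_eval hm σ t j i).symm
    rw [Tail_rec hm k c A ht j, pathX_eq hm A j, hpref]
    by_cases h1 : t + 1 < k
    · have hch : ∀ jt : Fin (m t), Tail hm k c A (t + 1) (j.snoc jt) =
          W (t + 1) (j.snoc jt) (Fin.snoc (Pdef hm σ t j) (σ t j (Pdef hm σ t j))) := by
        intro jt
        rw [ih (t + 1) (by omega) h1 (j.snoc jt), Pdef_snoc hm σ j jt]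
      simp only [hch]
      exact hσstep t h1 j (Pdef hm σ t j)
    · have hz : ∀ jt : Fin (m t), Tail hm k c A (t + 1) (j.snoc jt) = 0 := fun jt =>
        Tail_of_le hm k c A (by omega) _
      simp only [hz, Finset.sum_const_zero, mul_zero, add_zero]
      have htk : t = k - 1 := by omega
      subst htk
      exact hσlast j (Pdef hm σ (k - 1) j)

end Aux

/-- The supremum of the one-shot objective over all one-shot assignments equals the root
value `W 0 root` of the scenario-tree backward recursion, and it is attained. -/
theorem oneShot_isGreatest {X : Type*} [Nonempty X] (k : ℕ) (hk : 1 ≤ k)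
    (m : ℕ → ℕ) (hm : ∀ i, 1 ≤ m i)
    (c : (t : ℕ) → Node m t → (Fin (t + 1) → X) → ℝ)
    (W : (t : ℕ) → Node m t → (Fin t → X) → ℝ)
    (hWlast : ∀ (j : Node m (k - 1)) (x : Fin (k - 1) → X),
      IsGreatest (Set.range fun xk : X => c (k - 1) j (Fin.snoc x xk)) (W (k - 1) j x))
    (hWstep : ∀ t, t + 1 < k → ∀ (j : Node m t) (x : Fin t → X),
      IsGreatest (Set.range fun xt : X =>
          c t j (Fin.snoc x xt) +
            (1 / (m t : ℝ)) * ∑ jt : Fin (m t), W (t + 1) (j.snoc jt) (Fin.snoc x xt))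
        (W t j x)) :
    IsGreatest (Set.range (oneShotF k m c)) (W 0 (Node.root m) (fun i => i.elim0)) := by
  classical
  have h0fun : ∀ f : Fin 0 → X, f = (fun i => i.elim0) := fun f =>
    funext fun i => i.elim0
  -- the selection rule
  set σ : (t : ℕ) → Node m t → (Fin t → X) → X := fun t j x =>
    if h : t + 1 < k then Exists.choose (hWstep t h j x).1
    else if h2 : t = k - 1 then Exists.choose (hWlast (h2 ▸ j) (h2 ▸ x)).1
    else Classical.arbitrary X with hσ
  have hσstep : ∀ t (h : t + 1 < k) (j : Node m t) (x : Fin t → X),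
      c t j (Fin.snoc x (σ t j x)) +
        (1 / (m t : ℝ)) * ∑ jt : Fin (m t), W (t + 1) (j.snoc jt) (Fin.snoc x (σ t j x))
        = W t j x := by
    intro t h j x
    have : σ t j x = Exists.choose (hWstep t h j x).1 := by rw [hσ]; simp [h]
    rw [this]
    exact Exists.choose_spec (hWstep t h j x).1
  have hσlast : ∀ (j : Node m (k - 1)) (x : Fin (k - 1) → X),
      c (k - 1) j (Fin.snoc x (σ (k - 1) j x)) = W (k - 1) j x := by
    intro j x
    have h1 : ¬ (k - 1) + 1 < k := by omega
    have : σ (k - 1) j x = Exists.choose (hWlast j x).1 := by rw [hσ]; simp [h1]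
    rw [this]
    exact Exists.choose_spec (hWlast j x).1
  constructor
  · refine ⟨fun t j => σ t j (Pdef hm σ t j), ?_⟩
    rw [← Tail_zero hm k c,
      tail_eq hm k c W σ hσstep hσlast k 0 (by omega) (by omega) (Node.root m)]
    exact congrArg (W 0 (Node.root m)) (h0fun _)
  · rintro y ⟨A, rfl⟩
    rw [← Tail_zero hm k c A]
    have := tail_le hm k c W hWlast hWstep k 0 (by omega) (by omega) (Node.root m) A
    rwa [h0fun (fun i : Fin 0 => A i (restr hm (Node.root m) i))] at this
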